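/- A norm on the plane is Radon if and only if for every triangle a₁a₂a₃, the quantity (1/2)·βᵢ·ηᵢ is independent of i, where βᵢ is the norm-length of the side opposite aᵢ and ηᵢ is the norm-distance from aᵢ to the line through the opposite side. -/

import Mathlib

/-- Birkhoff normality: `x ⊣ y` iff `‖x‖ ≤ ‖x + t • y‖` for all `t`. -/
def BNormal {V : Type*} [NormedAddCommGroup V] [NormedSpace ℝ V] (x y : V) : Prop :=
  ∀ t : ℝ, ‖x‖ ≤ ‖x + t • y‖

/-- The norm-distance from a point `p` to the line through `q` and `r`. -/
noncomputable def distToLine {V : Type*} [NormedAddCommGroup V] [NormedSpace ℝ V]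
    (p q r : V) : ℝ :=
  sInf {d : ℝ | ∃ t : ℝ, d = ‖p - (q + t • (r - q))‖}


open Set
namespace Stmt13Aux

/-! ### One-sided derivatives of convex functions on ℝ -/

noncomputable def rD (G : ℝ → ℝ) (t : ℝ) : ℝ := sInf (slope G t '' Set.Ioi t)
noncomputable def lD (G : ℝ → ℝ) (t : ℝ) : ℝ := sSup (slope G t '' Set.Iio t)

section ConvexTools

variable {G : ℝ → ℝ} (hG : ConvexOn ℝ Set.univ G) {t : ℝ}
include hG

lemma slope_mono' {u v : ℝ} (hu : u ≠ t) (hv : v ≠ t) (huv : u ≤ v) :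
    slope G t u ≤ slope G t v := by
  rw [slope_def_field, slope_def_field]
  exact hG.secant_mono (mem_univ _) (mem_univ _) (mem_univ _) hu hv huv

lemma bddBelow_slopes : BddBelow (slope G t '' Set.Ioi t) := by
  refine ⟨slope G t (t - 1), ?_⟩
  rintro _ ⟨u, hu, rfl⟩
  exact slope_mono' hG (by norm_num) (ne_of_gt hu) (by simp at hu ⊢; linarith)

lemma bddAbove_slopes : BddAbove (slope G t '' Set.Iio t) := by
  refine ⟨slope G t (t + 1), ?_⟩
  rintro _ ⟨u, hu, rfl⟩
  exact slope_mono' hG (ne_of_lt hu) (by norm_num) (by simp at hu ⊢; linarith)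

lemma rD_le {u : ℝ} (hu : t < u) : rD G t ≤ slope G t u :=
  csInf_le (bddBelow_slopes hG) ⟨u, hu, rfl⟩

lemma le_lD {u : ℝ} (hu : u < t) : slope G t u ≤ lD G t :=
  le_csSup (bddAbove_slopes hG) ⟨u, hu, rfl⟩

lemma lD_le_rD : lD G t ≤ rD G t := by
  refine csSup_le ⟨slope G t (t - 1), ⟨t - 1, by simp, rfl⟩⟩ ?_
  rintro _ ⟨u, hu, rfl⟩
  refine le_csInf ⟨slope G t (t + 1), ⟨t + 1, by simp, rfl⟩⟩ ?_
  rintro _ ⟨v, hv, rfl⟩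
  exact slope_mono' hG (ne_of_lt hu) (ne_of_gt hv) (le_of_lt ((show u < t from hu).trans hv))

lemma ge_line_right {u : ℝ} (htu : t ≤ u) : G t + (u - t) * rD G t ≤ G u := by
  rcases eq_or_lt_of_le htu with rfl | h
  · simp
  · have h1 : rD G t ≤ (G u - G t) / (u - t) := by
      have := rD_le hG h; rwa [slope_def_field] at this
    have h2 : rD G t * (u - t) ≤ G u - G t := (le_div_iff₀ (by linarith)).1 h1
    nlinarith

lemma ge_line_left {u : ℝ} (hut : u ≤ t) : G t + (u - t) * lD G t ≤ G u := by
  rcases eq_or_lt_of_le hut with rfl | h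
  · simp
  · have h1 : (G u - G t) / (u - t) ≤ lD G t := by
      have := le_lD hG h; rwa [slope_def_field] at this
    have h2 : lD G t * (u - t) ≤ G u - G t := by
      rw [div_le_iff_of_neg (by linarith)] at h1; linarith
    nlinarith

lemma hasDerivWithinAt_rD : HasDerivWithinAt G (rD G t) (Ici t) t := by
  rw [hasDerivWithinAt_iff_tendsto_slope, Ici_sdiff_left]
  exact MonotoneOn.tendsto_nhdsGT
    (fun u hu v hv huv => slope_mono' hG (ne_of_gt hu) (ne_of_gt hv) huv)
    (bddBelow_slopes hG)

end ConvexTools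

variable {V : Type*} [NormedAddCommGroup V] [NormedSpace ℝ V]

section Ortho

variable {n : V → ℝ} (hadd : ∀ u v : V, n (u + v) ≤ n u + n v)
  (hsmul : ∀ (s : ℝ) (u : V), n (s • u) = |s| * n u)
include hadd hsmul

lemma convexOn_line (w0 w1 : V) :
    ConvexOn ℝ Set.univ (fun s : ℝ => n (w0 + s • w1)) := by
  refine ⟨convex_univ, ?_⟩
  intro x _ y _ la lb hla hlb hlab
  have key : w0 + (la * x + lb * y) • w1
      = la • (w0 + x • w1) + lb • (w0 + y • w1) := by
    match_scalars
    · simp [hlab]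
    · ring
  simp only [smul_eq_mul, key]
  calc n (la • (w0 + x • w1) + lb • (w0 + y • w1))
      ≤ n (la • (w0 + x • w1)) + n (lb • (w0 + y • w1)) := hadd _ _
    _ = la * n (w0 + x • w1) + lb * n (w0 + y • w1) := by
        rw [hsmul, hsmul, abs_of_nonneg hla, abs_of_nonneg hlb]

lemma ortho_char (w0 w1 : V) (t c : ℝ) :
    (∀ s : ℝ, n (w0 + t • w1) ≤ n ((w0 + t • w1) + s • (w1 + c • (w0 + t • w1)))) ↔
      (0 ≤ c * n (w0 + t • w1) + rD (fun s : ℝ => n (w0 + s • w1)) t ∧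
        c * n (w0 + t • w1) + lD (fun s : ℝ => n (w0 + s • w1)) t ≤ 0) := by
  set G : ℝ → ℝ := fun s : ℝ => n (w0 + s • w1) with hGdef
  have hG : ConvexOn ℝ Set.univ G := convexOn_line hadd hsmul w0 w1
  set z : V := w0 + t • w1 with hz
  have hGt : G t = n z := rfl
  set y : V := w1 + c • z with hy
  have key : ∀ s : ℝ, 1 + s * c ≠ 0 →
      n (z + s • y) = |1 + s * c| * G (t + s / (1 + s * c)) := by
    intro s hs
    have hrw : z + s • y = (1 + s * c) • (w0 + (t + s / (1 + s * c)) • w1) := by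
      rw [hy, hz]
      match_scalars
      · ring
      · field_simp
        ring
    rw [hrw, hsmul]
  rw [← hGt]
  constructor
  · intro hmin
    have aux : ∀ h : ℝ, 1 - h * c > 0 → (1 - h * c) * G t ≤ G (t + h) := by
      intro h hh
      have h1 : 1 + (h / (1 - h * c)) * c = 1 / (1 - h * c) := by field_simp; ring
      have hs : 1 + (h / (1 - h * c)) * c ≠ 0 := by rw [h1]; positivity
      have h2 : t + (h / (1 - h * c)) / (1 + (h / (1 - h * c)) * c) = t + h := by
        rw [h1]; field_simp
      have hm := hmin (h / (1 - h * c))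
      rw [key _ hs, h2, h1, abs_of_pos (show (0:ℝ) < 1 / (1 - h * c) by positivity)] at hm
      rw [hGt]
      calc (1 - h * c) * n z ≤ (1 - h * c) * (1 / (1 - h * c) * G (t + h)) :=
            mul_le_mul_of_nonneg_left hm (le_of_lt hh)
        _ = G (t + h) := by field_simp
    have slopeBoundR : ∀ h : ℝ, 0 < h → 1 - h * c > 0 → -(c * G t) ≤ slope G t (t + h) := by
      intro h hh hhc
      have ha := aux h hhc
      rw [slope_def_field, le_div_iff₀ (by linarith : (0:ℝ) < t + h - t)]
      nlinarith
    have slopeBoundL : ∀ h : ℝ, h < 0 → 1 - h * c > 0 → slope G t (t + h) ≤ -(c * G t) := by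
      intro h hh hhc
      have ha := aux h hhc
      rw [slope_def_field, div_le_iff_of_neg (by linarith : t + h - t < 0)]
      nlinarith
    constructor
    · have hb : ∀ x ∈ slope G t '' Ioi t, -(c * G t) ≤ x := by
        rintro _ ⟨u, hu, rfl⟩
        have hu' : t < u := hu
        rcases lt_or_ge 0 (1 - (u - t) * c) with hcase | hcase
        · have := slopeBoundR (u - t) (by linarith) hcase
          simpa using this
        · have hc : 0 < c := by nlinarith
          have h1 : (0:ℝ) < 1 / (2 * c) := by positivity
          have h2 : 1 - (1 / (2 * c)) * c > 0 := by
            have he : (1 / (2 * c)) * c = 1 / 2 := by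
              field_simp
            rw [he]; norm_num
          have hb1 := slopeBoundR (1 / (2 * c)) h1 h2
          have hle : t + 1 / (2 * c) ≤ u := by
            have e1 : 1 / c ≤ u - t := by
              rw [div_le_iff₀ hc]; nlinarith
            have e2 : 1 / (2 * c) ≤ 1 / c :=
              one_div_le_one_div_of_le hc (by linarith)
            linarith
          exact hb1.trans (slope_mono' hG (by linarith) (ne_of_gt hu') hle)
      have hne : (slope G t '' Ioi t).Nonempty := ⟨slope G t (t+1), ⟨t+1, by simp, rfl⟩⟩
      have hle := le_csInf hne hb
      have : -(c * G t) ≤ rD G t := hle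
      linarith
    · have hb : ∀ x ∈ slope G t '' Iio t, x ≤ -(c * G t) := by
        rintro _ ⟨u, hu, rfl⟩
        have hu' : u < t := hu
        rcases lt_or_ge 0 (1 - (u - t) * c) with hcase | hcase
        · have := slopeBoundL (u - t) (by linarith) hcase
          simpa using this
        · have hc : c < 0 := by nlinarith
          have h1 : 1 / (2 * c) < 0 := div_neg_of_pos_of_neg (by norm_num) (by linarith)
          have h2 : 1 - (1 / (2 * c)) * c > 0 := by
            have he : (1 / (2 * c)) * c = 1 / 2 := by
              field_simp [hc.ne]
              try ring
            rw [he]; norm_num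
          have hb1 := slopeBoundL (1 / (2 * c)) h1 h2
          have hle : u ≤ t + 1 / (2 * c) := by
            have e1 : u - t ≤ 1 / c := by
              rw [le_div_iff_of_neg hc]; nlinarith
            have e2 : 1 / c ≤ 1 / (2 * c) := by
              have ed : 1 / (2 * c) - 1 / c = -(1 / (2 * c)) := by
                field_simp [hc.ne]
                try ring
              linarith
            linarith
          exact (slope_mono' hG (ne_of_lt hu') (by linarith) hle).trans hb1
      have hne : (slope G t '' Iio t).Nonempty := ⟨slope G t (t-1), ⟨t-1, by simp, rfl⟩⟩
      have hle := csSup_le hne hb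
      have : lD G t ≤ -(c * G t) := hle
      linarith
  · rintro ⟨h1, h2⟩ s
    have posmin : ∀ s' : ℝ, 0 < 1 + s' * c → G t ≤ n (z + s' • y) := by
      intro s' hs'
      rw [key _ (ne_of_gt hs'), abs_of_pos hs']
      have hdenom : (1 + s' * c) * (s' / (1 + s' * c)) = s' := by field_simp
      rcases le_or_gt 0 s' with hsgn | hsgn
      · have hh : 0 ≤ s' / (1 + s' * c) := by positivity
        have glr := ge_line_right hG (t := t) (u := t + s' / (1 + s' * c)) (by linarith)
        have e : (1 + s' * c) * (G t + (t + s' / (1 + s' * c) - t) * rD G t)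
            = G t + s' * c * G t + ((1 + s' * c) * (s' / (1 + s' * c))) * rD G t := by
          ring
        rw [hdenom] at e
        have hs'nonneg : 0 ≤ s' * (c * G t + rD G t) := mul_nonneg hsgn h1
        nlinarith [mul_le_mul_of_nonneg_left glr (le_of_lt hs')]
      · have hh : s' / (1 + s' * c) < 0 := div_neg_of_neg_of_pos hsgn hs'
        have gll := ge_line_left hG (t := t) (u := t + s' / (1 + s' * c)) (by linarith)
        have e : (1 + s' * c) * (G t + (t + s' / (1 + s' * c) - t) * lD G t)
            = G t + s' * c * G t + ((1 + s' * c) * (s' / (1 + s' * c))) * lD G t := by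
          ring
        rw [hdenom] at e
        have hs'nonneg : 0 ≤ s' * (c * G t + lD G t) := by nlinarith
        nlinarith [mul_le_mul_of_nonneg_left gll (le_of_lt hs')]
    rcases lt_or_ge 0 (1 + s * c) with hpos | hneg
    · exact posmin s hpos
    · by_contra hcon
      push_neg at hcon
      have hsc : s * c ≤ -1 := by linarith
      set μ : ℝ := -(s * c) with hμ
      have hμ1 : 1 ≤ μ := by simp [hμ]; linarith
      have hμpos : 0 < μ := by linarith
      set lam : ℝ := 1 / (2 * μ) with hlam
      have hlampos : 0 < lam := by positivity
      have hlamle : lam ≤ 1 / 2 := by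
        rw [hlam]
        exact one_div_le_one_div_of_le (by norm_num) (by linarith)
      have hF : ConvexOn ℝ Set.univ (fun s : ℝ => n (z + s • y)) :=
        convexOn_line hadd hsmul z y
      have hconv := hF.2 (mem_univ s) (mem_univ (0:ℝ)) (le_of_lt hlampos)
        (by linarith : (0:ℝ) ≤ 1 - lam) (by ring)
      simp only [smul_eq_mul, mul_zero, add_zero, zero_smul] at hconv
      have hhalf : 1 + (lam * s) * c = 1/2 := by
        have hsc' : s * c = -μ := by rw [hμ]; ring
        have e1 : (lam * s) * c = lam * (s * c) := by ring
        have e2 : lam * (s * c) = -(1/2) := by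
          rw [hlam, hsc']
          field_simp
          try ring
        rw [e1, e2]; norm_num
      have hge := posmin (lam * s) (by rw [hhalf]; norm_num)
      have : n (z + (lam * s) • y) < n z := by
        calc n (z + (lam * s) • y) ≤ lam * n (z + s • y) + (1 - lam) * n z := hconv
          _ < lam * n z + (1 - lam) * n z := by
              apply add_lt_add_left
              exact mul_lt_mul_of_pos_left hcon hlampos
          _ = n z := by ring
      rw [hGt] at hge
      linarith

end Ortho
end Stmt13Aux
open Set
set_option linter.unusedSectionVars false
namespace Stmt13AuxB

variable {V : Type*} [NormedAddCommGroup V] [NormedSpace ℝ V]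

section BasisStuff

variable [FiniteDimensional ℝ V] (b : Module.Basis (Fin 2) ℝ V)

/-- The determinant form in the coordinates of `b`. -/
noncomputable def om (u v : V) : ℝ :=
  b.repr u 0 * b.repr v 1 - b.repr u 1 * b.repr v 0

lemma om_add_left (u v w : V) : om b (u + v) w = om b u w + om b v w := by
  simp [om]; ring
lemma om_add_right (u v w : V) : om b u (v + w) = om b u v + om b u w := by
  simp [om]; ring
lemma om_smul_left (s : ℝ) (u w : V) : om b (s • u) w = s * om b u w := by
  simp [om]; ring
lemma om_smul_right (s : ℝ) (u w : V) : om b u (s • w) = s * om b u w := by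
  simp [om]; ring
lemma om_swap (u v : V) : om b u v = -om b v u := by simp [om]; ring
lemma om_self (u : V) : om b u u = 0 := by simp [om]; ring
lemma om_zero_left (w : V) : om b 0 w = 0 := by simp [om]
lemma om_zero_right (w : V) : om b w 0 = 0 := by simp [om]

lemma om_basis01 : om b (b 0) (b 1) = 1 := by
  simp [om, Module.Basis.repr_self]

lemma abs_om_swap (u v : V) : |om b u v| = |om b v u| := by
  rw [om_swap]; exact abs_neg _

lemma om_ne_zero_left {u w : V} (h : om b u w ≠ 0) : u ≠ 0 := by
  rintro rfl; exact h (om_zero_left b w)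
lemma om_ne_zero_right {u w : V} (h : om b u w ≠ 0) : w ≠ 0 := by
  rintro rfl; exact h (om_zero_right b u)

/-- The (continuous) linear functional `x ↦ om x y`. -/
noncomputable def Jmap (y : V) : V →L[ℝ] ℝ :=
  LinearMap.toContinuousLinearMap
    { toFun := fun x => om b x y
      map_add' := fun u v => om_add_left b u v y
      map_smul' := fun s u => om_smul_left b s u y }

@[simp] lemma Jmap_apply (y x : V) : Jmap b y x = om b x y := rfl

/-- The antinorm. -/
noncomputable def qn (y : V) : ℝ := ‖Jmap b y‖

lemma qn_nonneg (y : V) : 0 ≤ qn b y := norm_nonneg _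

lemma abs_om_le (x y : V) : |om b x y| ≤ qn b y * ‖x‖ := by
  have := (Jmap b y).le_opNorm x
  simpa [Real.norm_eq_abs, qn] using this

lemma Jmap_add (y z : V) : Jmap b (y + z) = Jmap b y + Jmap b z := by
  ext x; simp [om_add_right]
lemma Jmap_smul (s : ℝ) (y : V) : Jmap b (s • y) = s • Jmap b y := by
  ext x; simp [om_smul_right]

lemma qn_add_le (y z : V) : qn b (y + z) ≤ qn b y + qn b z := by
  rw [qn, Jmap_add]; exact norm_add_le _ _
lemma qn_smul (s : ℝ) (y : V) : qn b (s • y) = |s| * qn b y := by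
  simp only [qn, Jmap_smul b s y]
  rw [norm_smul s (Jmap b y), Real.norm_eq_abs]

lemma repr_eq_om (y : V) :
    b.repr y 1 = om b (b 0) y ∧ b.repr y 0 = -om b (b 1) y := by
  constructor <;> simp [om, Module.Basis.repr_self]

lemma eq_zero_of_om (y : V) (h0 : om b (b 0) y = 0) (h1 : om b (b 1) y = 0) : y = 0 := by
  have e0 : b.repr y 0 = 0 := by rw [(repr_eq_om b y).2, h1]; ring
  have e1 : b.repr y 1 = 0 := by rw [(repr_eq_om b y).1, h0]
  have := b.ext_elem (x := y) (y := 0) (fun i => by fin_cases i <;> simp [e0, e1])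
  simpa using this

lemma qn_pos {y : V} (hy : y ≠ 0) : 0 < qn b y := by
  rw [qn, norm_pos_iff]
  intro hJ
  apply hy
  apply eq_zero_of_om b
  · have := congrArg (fun f : V →L[ℝ] ℝ => f (b 0)) hJ; simpa using this
  · have := congrArg (fun f : V →L[ℝ] ℝ => f (b 1)) hJ; simpa using this

/-- Expansion of any vector in a basis `v, w` with `om v w ≠ 0`. -/
lemma expand {v w : V} (hD : om b v w ≠ 0) (x : V) :
    x = (om b x w / om b v w) • v + (om b v x / om b v w) • w := by
  have key : om b v w • x = om b x w • v + om b v x • w := by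
    apply b.ext_elem
    intro i
    fin_cases i <;>
      simp [om, map_add, map_smul, smul_eq_mul] <;> ring
  calc x = (om b v w)⁻¹ • (om b v w • x) := by rw [inv_smul_smul₀ hD]
    _ = (om b v w)⁻¹ • (om b x w • v + om b v x • w) := by rw [key]
    _ = (om b x w / om b v w) • v + (om b v x / om b v w) • w := by
        rw [smul_add, smul_smul, smul_smul, div_eq_inv_mul, div_eq_inv_mul]

/-- Attainment of the antinorm on the unit sphere. -/
lemma exists_unit_max {y : V} (hy : y ≠ 0) :
    ∃ x : V, ‖x‖ = 1 ∧ |om b x y| = qn b y := by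
  have hb0 : ‖b 0‖ ≠ 0 := norm_ne_zero_iff.2 (b.ne_zero 0)
  set x0 : V := ‖b 0‖⁻¹ • b 0 with hx0def
  have hx0 : ‖x0‖ = 1 := by
    rw [hx0def, norm_smul, Real.norm_eq_abs, abs_of_nonneg (inv_nonneg.2 (norm_nonneg _)),
      inv_mul_cancel₀ hb0]
  have hsc : IsCompact (Metric.sphere (0:V) 1) := isCompact_sphere 0 1
  have hcont : ContinuousOn (fun x : V => |om b x y|) (Metric.sphere (0:V) 1) := by
    apply Continuous.continuousOn
    have : Continuous fun x : V => om b x y := (Jmap b y).continuous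
    exact this.abs
  obtain ⟨x, hxmem, hxmax⟩ := hsc.exists_isMaxOn ⟨x0, by simpa using hx0⟩ hcont
  have hxnorm : ‖x‖ = 1 := by simpa using hxmem
  refine ⟨x, hxnorm, le_antisymm ?_ ?_⟩
  · calc |om b x y| ≤ qn b y * ‖x‖ := abs_om_le b x y
      _ = qn b y := by rw [hxnorm, mul_one]
  · rw [qn]
    apply ContinuousLinearMap.opNorm_le_bound _ (abs_nonneg _)
    intro u
    rcases eq_or_ne u 0 with rfl | hu
    · simp [om_zero_left]
    · have hmem : (‖u‖⁻¹ • u) ∈ Metric.sphere (0:V) 1 := by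
        simp [norm_smul, abs_of_nonneg, inv_mul_cancel₀ (norm_ne_zero_iff.2 hu)]
      have hval0 : |om b (‖u‖⁻¹ • u) y| ≤ |om b x y| := hxmax hmem
      rw [om_smul_left] at hval0
      have hval : |‖u‖⁻¹| * |om b u y| ≤ |om b x y| := by
        rw [← abs_mul]; exact hval0
      rw [abs_of_nonneg (inv_nonneg.2 (norm_nonneg u))] at hval
      have hnormpos : 0 < ‖u‖ := norm_pos_iff.2 hu
      rw [Real.norm_eq_abs]
      calc |om b u y| = ‖u‖ * (‖u‖⁻¹ * |om b u y|) := by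
            field_simp
        _ ≤ ‖u‖ * |om b x y| := by
            apply mul_le_mul_of_nonneg_left hval (norm_nonneg u)
        _ = |om b x y| * ‖u‖ := mul_comm _ _

lemma om_add_tmul (v w : V) (t : ℝ) : om b (v + t • w) w = om b v w := by
  rw [om_add_left, om_smul_left, om_self]; ring

lemma dist_isLeast (v w : V) (hw : w ≠ 0) :
    IsLeast {d : ℝ | ∃ t : ℝ, d = ‖v + t • w‖} (|om b v w| / qn b w) := by
  have hq : 0 < qn b w := qn_pos b hw
  constructor
  · obtain ⟨x, hx1, hxmax⟩ := exists_unit_max b hw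
    have hxw : om b x w ≠ 0 := by
      intro h; rw [h] at hxmax; simp at hxmax; exact absurd hxmax.symm (ne_of_gt hq)
    set α : ℝ := om b v w / om b x w with hα
    set β : ℝ := om b x v / om b x w with hβ
    have hexp : v = α • x + β • w := expand b hxw v
    refine ⟨-β, ?_⟩
    have hcomb : v + (-β) • w = α • x := by
      rw [hexp]; module
    rw [hcomb, norm_smul, Real.norm_eq_abs, hx1, mul_one, hα, abs_div, hxmax]
  · rintro d ⟨t, rfl⟩
    rw [div_le_iff₀ hq]
    calc |om b v w| = |om b (v + t • w) w| := by rw [om_add_tmul]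
      _ ≤ qn b w * ‖v + t • w‖ := abs_om_le b _ w
      _ = ‖v + t • w‖ * qn b w := mul_comm _ _

lemma exists_dual_unit (y : V) (hy : y ≠ 0) :
    ∃ y' : V, qn b y' = 1 ∧ om b y y' = ‖y‖ := by
  obtain ⟨g, hg1, hgy⟩ := exists_dual_vector ℝ y (norm_ne_zero_iff.2 hy)
  set y' : V := (-(g (b 1))) • b 0 + (g (b 0)) • b 1 with hy'
  have homg : ∀ x : V, om b x y' = g x := by
    intro x
    have hxsum : x = b.repr x 0 • b 0 + b.repr x 1 • b 1 := by
      have := b.sum_repr x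
      rw [Fin.sum_univ_two] at this
      exact this.symm
    calc om b x y' = b.repr x 0 * g (b 0) + b.repr x 1 * g (b 1) := by
          simp [om, hy', map_add, map_smul, Module.Basis.repr_self]
          try ring
      _ = g x := by
          conv_rhs => rw [hxsum]
          rw [map_add, map_smul, map_smul]
          simp [smul_eq_mul]
  have hJg : Jmap b y' = g := by
    ext x; simp [homg x]
  refine ⟨y', ?_, ?_⟩
  · rw [qn, hJg, hg1]
  · rw [homg y]; exact_mod_cast hgy

lemma qdist_isLeast (x y : V) (hy : y ≠ 0) :
    IsLeast {d : ℝ | ∃ t : ℝ, d = qn b (x + t • y)} (|om b x y| / ‖y‖) := by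
  have hn : 0 < ‖y‖ := norm_pos_iff.2 hy
  constructor
  · obtain ⟨y', hq1, homy⟩ := exists_dual_unit b y hy
    have hD : om b y y' ≠ 0 := by rw [homy]; exact ne_of_gt hn
    set α : ℝ := om b x y' / om b y y' with hα
    set β : ℝ := om b y x / om b y y' with hβ
    have hexp : x = α • y + β • y' := expand b hD x
    refine ⟨-α, ?_⟩
    have hcomb : x + (-α) • y = β • y' := by
      rw [hexp]; module
    rw [hcomb, qn_smul, hq1, mul_one, hβ, abs_div, homy, abs_om_swap b y x,
      abs_of_nonneg (norm_nonneg y)]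
  · rintro d ⟨t, rfl⟩
    rw [div_le_iff₀ hn]
    calc |om b x y| = |om b (x + t • y) y| := by rw [om_add_tmul]
      _ = |om b y (x + t • y)| := abs_om_swap b _ _
      _ ≤ qn b (x + t • y) * ‖y‖ := abs_om_le b y _

lemma norm_ortho_iff (x y : V) (hy : y ≠ 0) :
    (∀ t : ℝ, ‖x‖ ≤ ‖x + t • y‖) ↔ ‖x‖ * qn b y = |om b x y| := by
  have hq : 0 < qn b y := qn_pos b hy
  have hL := dist_isLeast b x y hy
  constructor
  · intro h
    obtain ⟨t, ht⟩ := hL.1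
    have h1 : ‖x‖ ≤ |om b x y| / qn b y := by rw [ht]; exact h t
    have h2 : ‖x‖ * qn b y ≤ |om b x y| := (le_div_iff₀ hq).1 h1
    have h3 : |om b x y| ≤ qn b y * ‖x‖ := abs_om_le b x y
    linarith [mul_comm ‖x‖ (qn b y)]
  · intro h t
    have hmem := hL.2 ⟨t, rfl⟩
    rw [← h, mul_div_assoc, div_self (ne_of_gt hq), mul_one] at hmem
    exact hmem

lemma qn_ortho_iff (x y : V) (hx : x ≠ 0) (hy : y ≠ 0) :
    (∀ t : ℝ, qn b x ≤ qn b (x + t • y)) ↔ qn b x * ‖y‖ = |om b x y| := by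
  have hn : 0 < ‖y‖ := norm_pos_iff.2 hy
  have hL := qdist_isLeast b x y hy
  constructor
  · intro h
    obtain ⟨t, ht⟩ := hL.1
    have h1 : qn b x ≤ |om b x y| / ‖y‖ := by rw [ht]; exact h t
    have h2 : qn b x * ‖y‖ ≤ |om b x y| := (le_div_iff₀ hn).1 h1
    have h3 : |om b x y| ≤ qn b x * ‖y‖ := by
      calc |om b x y| = |om b y x| := abs_om_swap b _ _
        _ ≤ qn b x * ‖y‖ := abs_om_le b y x
    linarith
  · intro h t
    have hmem := hL.2 ⟨t, rfl⟩
    rw [← h, mul_div_assoc, div_self (ne_of_gt hn), mul_one] at hmem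
    exact hmem

end BasisStuff
end Stmt13AuxB
namespace Stmt13AuxC
open Stmt13Aux Stmt13AuxB Set

variable {V : Type*} [NormedAddCommGroup V] [NormedSpace ℝ V] [FiniteDimensional ℝ V]
  (b : Module.Basis (Fin 2) ℝ V)

lemma norm_hsmul : ∀ (s : ℝ) (u : V), ‖s • u‖ = |s| * ‖u‖ := by
  intro s u; rw [norm_smul, Real.norm_eq_abs]

lemma line_const
    (hsym : ∀ x y : V, x ≠ 0 → y ≠ 0 → ‖x‖ * qn b y = |om b x y| → ‖y‖ * qn b x = |om b y x|)
    (w0 w1 : V) (hD : om b w0 w1 ≠ 0) (t : ℝ) :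
    qn b (w0 + t • w1) * ‖w0‖ = qn b w0 * ‖w0 + t • w1‖ := by
  have hz : ∀ s : ℝ, (w0 + s • w1) ≠ 0 := by
    intro s
    apply om_ne_zero_left b (w := w1)
    rw [om_add_tmul]
    exact hD
  set A : ℝ → ℝ := fun s => ‖w0 + s • w1‖ with hA
  set B : ℝ → ℝ := fun s => qn b (w0 + s • w1) with hB
  have hApos : ∀ s, 0 < A s := fun s => norm_pos_iff.2 (hz s)
  have hBpos : ∀ s, 0 < B s := fun s => qn_pos b (hz s)
  have hAconv : ConvexOn ℝ Set.univ A :=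
    convexOn_line (fun u v => norm_add_le u v) norm_hsmul w0 w1
  have hBconv : ConvexOn ℝ Set.univ B :=
    convexOn_line (fun u v => qn_add_le b u v) (fun s u => qn_smul b s u) w0 w1
  -- orthogonality transfer
  have otransfer : ∀ (u c : ℝ),
      (∀ s : ℝ, A u ≤ ‖(w0 + u • w1) + s • (w1 + c • (w0 + u • w1))‖) ↔
      (∀ s : ℝ, B u ≤ qn b ((w0 + u • w1) + s • (w1 + c • (w0 + u • w1)))) := by
    intro u c
    set z : V := w0 + u • w1 with hzdef
    set y : V := w1 + c • z with hydef
    have homzy : om b z y = om b w0 w1 := by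
      rw [hydef, om_add_right, om_smul_right, om_self, hzdef, om_add_tmul]
      ring
    have hy : y ≠ 0 := om_ne_zero_right b (w := y) (u := z) (by rw [homzy]; exact hD)
    have h1 := norm_ortho_iff b z y hy
    have h2 := qn_ortho_iff b z y (hz u) hy
    rw [h1, h2]
    constructor
    · intro h
      have := hsym z y (hz u) hy h
      rw [abs_om_swap b y z] at this
      linarith [mul_comm (qn b z) ‖y‖, mul_comm ‖y‖ (qn b z)]
    · intro h
      have h' : ‖y‖ * qn b z = |om b y z| := by
        rw [abs_om_swap b y z, ← h]; ring
      exact hsym y z hy (hz u) h'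
  -- key equality of logarithmic right derivatives
  have keyeq : ∀ u : ℝ, rD A u * B u = rD B u * A u := by
    intro u
    have hAu := hApos u
    have hBu := hBpos u
    -- direction 1 : c = -(rD A u)/(A u)
    have dir1 : rD B u * A u ≥ rD A u * B u := by
      set c : ℝ := -(rD A u) / A u with hc
      have hcA : c * A u = -(rD A u) := by
        rw [hc]; field_simp
      have hmin : ∀ s : ℝ, A u ≤ ‖(w0 + u • w1) + s • (w1 + c • (w0 + u • w1))‖ := by
        apply (ortho_char (fun u v => norm_add_le u v) norm_hsmul w0 w1 u c).2
        constructor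
        · rw [show c * ‖w0 + u • w1‖ = c * A u from rfl, hcA]; simp; exact le_rfl
        · rw [show c * ‖w0 + u • w1‖ = c * A u from rfl, hcA]
          have := lD_le_rD hAconv (t := u)
          linarith
      have hq := (otransfer u c).1 hmin
      have := ((ortho_char (fun u v => qn_add_le b u v) (fun s u => qn_smul b s u) w0 w1 u c).1 hq).1
      have hcB : 0 ≤ c * B u + rD B u := this
      rw [hc] at hcB
      have h2 : 0 ≤ (-(rD A u)) * B u + rD B u * A u := by
        calc (0:ℝ) = A u * 0 := by ring
          _ ≤ A u * ((-(rD A u) / A u) * B u + rD B u) := by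
              apply mul_le_mul_of_nonneg_left hcB (le_of_lt hAu)
          _ = (-(rD A u)) * B u + rD B u * A u := by
              field_simp
              try ring
      linarith
    -- direction 2 : c = -(rD B u)/(B u)
    have dir2 : rD A u * B u ≥ rD B u * A u := by
      set c : ℝ := -(rD B u) / B u with hc
      have hcB : c * B u = -(rD B u) := by
        rw [hc]; field_simp
      have hmin : ∀ s : ℝ, B u ≤ qn b ((w0 + u • w1) + s • (w1 + c • (w0 + u • w1))) := by
        apply (ortho_char (fun u v => qn_add_le b u v) (fun s u => qn_smul b s u) w0 w1 u c).2
        constructor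
        · rw [show c * qn b (w0 + u • w1) = c * B u from rfl, hcB]; simp; exact le_rfl
        · rw [show c * qn b (w0 + u • w1) = c * B u from rfl, hcB]
          have := lD_le_rD hBconv (t := u)
          linarith
      have hq := (otransfer u c).2 hmin
      have hcA : 0 ≤ c * A u + rD A u :=
        ((ortho_char (fun u v => norm_add_le u v) norm_hsmul w0 w1 u c).1 hq).1
      rw [hc] at hcA
      have h2 : 0 ≤ (-(rD B u)) * A u + rD A u * B u := by
        calc (0:ℝ) = B u * 0 := by ring
          _ ≤ B u * ((-(rD B u) / B u) * A u + rD A u) := by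
              apply mul_le_mul_of_nonneg_left hcA (le_of_lt hBu)
          _ = (-(rD B u)) * A u + rD A u * B u := by
              field_simp
              try ring
      linarith
    linarith
  -- the quotient is constant
  set R : ℝ → ℝ := fun s => B s / A s with hR
  have hRderiv : ∀ u : ℝ, HasDerivWithinAt R 0 (Ici u) u := by
    intro u
    have h := (hasDerivWithinAt_rD hBconv (t := u)).div
      (hasDerivWithinAt_rD hAconv (t := u)) (ne_of_gt (hApos u))
    have hval : (rD B u * A u - B u * rD A u) / (A u) ^ 2 = 0 := by
      rw [show rD B u * A u - B u * rD A u = 0 from by linarith [keyeq u], zero_div]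
    rwa [hval] at h
  have hAcont : Continuous A := by
    apply Continuous.norm
    exact continuous_const.add (continuous_id.smul continuous_const)
  have hBcont : Continuous B := by
    have hBeq : B = fun s => ‖Jmap b w0 + s • Jmap b w1‖ := by
      funext s
      rw [hB]
      show qn b (w0 + s • w1) = _
      rw [qn, Jmap_add, Jmap_smul]
    rw [hBeq]
    apply Continuous.norm
    exact continuous_const.add (continuous_id.smul continuous_const)
  have hRcont : Continuous R := hBcont.div hAcont (fun s => ne_of_gt (hApos s))
  have hRconst : ∀ s : ℝ, R s = R 0 := by
    intro s
    rcases le_or_gt 0 s with hs | hs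
    · exact constant_of_has_deriv_right_zero (a := 0) (b := s) hRcont.continuousOn
        (fun x _ => hRderiv x) s (by constructor <;> [exact hs; exact le_refl s])
    · have := constant_of_has_deriv_right_zero (a := s) (b := 0) hRcont.continuousOn
        (fun x _ => hRderiv x) 0 (by constructor <;> [exact le_of_lt hs; exact le_refl (0:ℝ)])
      exact this.symm
  have hRt := hRconst t
  have hA0 : A 0 = ‖w0‖ := by rw [hA]; simp
  have hB0 : B 0 = qn b w0 := by rw [hB]; show qn b (w0 + (0:ℝ) • w1) = qn b w0; simp
  have : B t / A t = B 0 / A 0 := hRt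
  rw [hA0, hB0] at this
  have hw0 : (0:ℝ) < ‖w0‖ := by rw [← hA0]; exact hApos 0
  rw [div_eq_div_iff (ne_of_gt (hApos t)) (ne_of_gt hw0)] at this
  exact this

end Stmt13AuxC
namespace Stmt13AuxC
open Stmt13Aux Stmt13AuxB Set

variable {V : Type*} [NormedAddCommGroup V] [NormedSpace ℝ V] [FiniteDimensional ℝ V]
  (b : Module.Basis (Fin 2) ℝ V)

lemma distToLine_eq (p q r : V) (hqr : r - q ≠ 0) :
    distToLine p q r = |om b (p - q) (r - q)| / qn b (r - q) := by
  have hset : {d : ℝ | ∃ t : ℝ, d = ‖p - (q + t • (r - q))‖}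
      = {d : ℝ | ∃ t : ℝ, d = ‖(p - q) + t • (r - q)‖} := by
    ext d
    constructor
    · rintro ⟨t, rfl⟩
      exact ⟨-t, by congr 1; module⟩
    · rintro ⟨t, rfl⟩
      exact ⟨-t, by congr 1; module⟩
  rw [distToLine, hset, (dist_isLeast b (p - q) (r - q) hqr).csInf_eq]

lemma bnormal_iff (x y : V) (hy : y ≠ 0) :
    BNormal x y ↔ ‖x‖ * qn b y = |om b x y| :=
  norm_ortho_iff b x y hy

/-- Proportionality of norm and antinorm from Birkhoff symmetry. -/
lemma qn_prop
    (hsym : ∀ x y : V, x ≠ 0 → y ≠ 0 → ‖x‖ * qn b y = |om b x y| → ‖y‖ * qn b x = |om b y x|)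
    (v : V) : qn b v * ‖b 0‖ = qn b (b 0) * ‖v‖ := by
  have hline1 := line_const b hsym (b 0) (b 1) (by rw [om_basis01]; norm_num)
  have hline2 := line_const b hsym (b 1) (b 0)
    (by rw [om_swap, om_basis01]; norm_num)
  have hx : b 0 + (1:ℝ) • b 1 = b 1 + (1:ℝ) • b 0 := by module
  have hvne : b 1 + (1:ℝ) • b 0 ≠ 0 := by
    apply om_ne_zero_left b (w := b 1)
    rw [om_add_left, om_smul_left, om_self, om_basis01]
    norm_num
  have hvpos : (0:ℝ) < ‖b 1 + (1:ℝ) • b 0‖ := norm_pos_iff.2 hvne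
  have h1 := hline1 1
  rw [hx] at h1
  have h2 := hline2 1
  -- h1 : qn v * ‖b0‖ = qn b0 * ‖v‖ ; h2 : qn v * ‖b1‖ = qn b1 * ‖v‖
  have hcross : qn b (b 1) * ‖b 0‖ = qn b (b 0) * ‖b 1‖ := by
    have e : qn b (b 1) * ‖b 0‖ * ‖b 1 + (1:ℝ) • b 0‖
        = qn b (b 0) * ‖b 1‖ * ‖b 1 + (1:ℝ) • b 0‖ := by
      calc qn b (b 1) * ‖b 0‖ * ‖b 1 + (1:ℝ) • b 0‖
          = (qn b (b 1) * ‖b 1 + (1:ℝ) • b 0‖) * ‖b 0‖ := by ring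
        _ = (qn b (b 1 + (1:ℝ) • b 0) * ‖b 1‖) * ‖b 0‖ := by rw [← h2]; try ring
        _ = (qn b (b 1 + (1:ℝ) • b 0) * ‖b 0‖) * ‖b 1‖ := by ring
        _ = (qn b (b 0) * ‖b 1 + (1:ℝ) • b 0‖) * ‖b 1‖ := by rw [h1]
        _ = qn b (b 0) * ‖b 1‖ * ‖b 1 + (1:ℝ) • b 0‖ := by ring
    exact mul_right_cancel₀ (ne_of_gt hvpos) e
  obtain ⟨c0, c1, rfl⟩ : ∃ c0 c1 : ℝ, v = c0 • b 0 + c1 • b 1 := by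
    refine ⟨b.repr v 0, b.repr v 1, ?_⟩
    have := b.sum_repr v
    rw [Fin.sum_univ_two] at this
    exact this.symm
  rcases eq_or_ne c0 0 with hc0 | hc0
  · rw [hc0, zero_smul, zero_add, qn_smul, norm_smul, Real.norm_eq_abs]
    linear_combination |c1| * hcross
  · have hveq : c0 • b 0 + c1 • b 1 = c0 • (b 0 + (c1 / c0) • b 1) := by
      match_scalars
      · ring
      · field_simp
    rw [hveq, qn_smul, norm_smul, Real.norm_eq_abs]
    linear_combination |c0| * hline1 (c1 / c0)

/-- The half-area formula for each term, under proportionality. -/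
lemma term_eq
    (hprop : ∀ v : V, qn b v * ‖b 0‖ = qn b (b 0) * ‖v‖)
    (p q r : V) :
    (1/2 : ℝ) * ‖q - r‖ * distToLine p q r
      = |om b (p - q) (r - q)| * ‖b 0‖ / (2 * qn b (b 0)) := by
  have hq0 : (0:ℝ) < qn b (b 0) := qn_pos b (b.ne_zero 0)
  rcases eq_or_ne (r - q) 0 with hrq | hrq
  · have hqr' : q - r = 0 := by
      rw [← neg_sub r q, hrq, neg_zero]
    rw [hqr', hrq, om_zero_right, norm_zero, abs_zero]
    ring
  · have hnpos : (0:ℝ) < ‖r - q‖ := norm_pos_iff.2 hrq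
    have hqnpos : (0:ℝ) < qn b (r - q) := qn_pos b hrq
    have hn0 : (0:ℝ) < ‖b 0‖ := norm_pos_iff.2 (b.ne_zero 0)
    have e : qn b (r - q) = qn b (b 0) * ‖r - q‖ / ‖b 0‖ := by
      rw [eq_div_iff (ne_of_gt hn0)]
      exact hprop (r - q)
    rw [distToLine_eq b p q r hrq, e, norm_sub_rev q r]
    field_simp

end Stmt13AuxC

open Stmt13Aux Stmt13AuxB Stmt13AuxC in
/-- (Gołąb–Busemann / Tamássy) A norm on the plane is Radon iff for every triangle
`a b c` the quantity `(1/2)·(length of a side)·(distance to opposite vertex)` is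
independent of the choice of side. -/
theorem stmt13 {V : Type*} [NormedAddCommGroup V] [NormedSpace ℝ V]
    (hdim : Module.finrank ℝ V = 2) :
    (∀ x y : V, x ≠ 0 → y ≠ 0 → BNormal x y → BNormal y x) ↔
    (∀ a b c : V,
      (1 / 2) * ‖b - c‖ * distToLine a b c = (1 / 2) * ‖c - a‖ * distToLine b c a ∧
      (1 / 2) * ‖c - a‖ * distToLine b c a = (1 / 2) * ‖a - b‖ * distToLine c a b) := by
  haveI : FiniteDimensional ℝ V := FiniteDimensional.of_finrank_pos (by rw [hdim]; norm_num)
  set bs : Module.Basis (Fin 2) ℝ V := Module.finBasisOfFinrankEq ℝ V hdim with hbs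
  constructor
  · intro hsym
    have hsym' : ∀ x y : V, x ≠ 0 → y ≠ 0 →
        ‖x‖ * qn bs y = |om bs x y| → ‖y‖ * qn bs x = |om bs y x| := by
      intro x y hx hy h
      have hBN : BNormal x y := (bnormal_iff bs x y hy).2 h
      exact (bnormal_iff bs y x hx).1 (hsym x y hx hy hBN)
    have hprop := qn_prop bs hsym'
    intro p q r
    have h1 := term_eq bs hprop p q r
    have h2 := term_eq bs hprop q r p
    have h3 := term_eq bs hprop r p q
    have e12 : om bs (p - q) (r - q) = om bs (q - r) (p - r) := by
      simp only [om, map_sub, Finsupp.coe_sub, Pi.sub_apply]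
      ring
    have e13 : om bs (p - q) (r - q) = om bs (r - p) (q - p) := by
      simp only [om, map_sub, Finsupp.coe_sub, Pi.sub_apply]
      ring
    constructor
    · rw [h1, h2, ← e12]
    · rw [h2, h3, ← e12, ← e13]
  · intro hRHS x y hx hy hBN
    have h := (bnormal_iff bs x y hy).1 hBN
    have hqx : 0 < qn bs x := qn_pos bs hx
    have hqy : 0 < qn bs y := qn_pos bs hy
    have hnx : 0 < ‖x‖ := norm_pos_iff.2 hx
    have homxy : om bs x y ≠ 0 := by
      intro h0
      rw [h0, abs_zero] at h
      have : 0 < ‖x‖ * qn bs y := mul_pos hnx hqy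
      linarith
    have habs : 0 < |om bs x y| := abs_pos.2 homxy
    have htri := (hRHS (x + y) 0 x).1
    have e1 : distToLine (x + y) 0 x = |om bs x y| / qn bs x := by
      rw [distToLine_eq bs (x + y) 0 x (by simpa using hx)]
      congr 1
      · rw [sub_zero, sub_zero, om_add_left, om_self, zero_add, abs_om_swap]
      · rw [sub_zero]
    have e2 : distToLine 0 x (x + y) = |om bs x y| / qn bs y := by
      have hyy : (x + y) - x ≠ 0 := by simpa using hy
      rw [distToLine_eq bs 0 x (x + y) hyy]
      congr 1
      · rw [show om bs (0 - x) (x + y - x) = -om bs x y from by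
          simp only [om, map_sub, map_add, map_zero, Finsupp.coe_sub, Finsupp.coe_add,
            Finsupp.coe_zero, Pi.sub_apply, Pi.add_apply, Pi.zero_apply]
          ring]
        exact abs_neg _
      · rw [show (x + y) - x = y from add_sub_cancel_left x y]
    rw [e1, e2] at htri
    have hn1 : ‖(0:V) - x‖ = ‖x‖ := by rw [zero_sub, norm_neg]
    have hn2 : ‖x - (x + y)‖ = ‖y‖ := by
      rw [show x - (x + y) = -y from by abel, norm_neg]
    rw [hn1, hn2] at htri
    have htri2 : (‖x‖ * |om bs x y|) / (2 * qn bs x) = (‖y‖ * |om bs x y|) / (2 * qn bs y) := by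
      calc (‖x‖ * |om bs x y|) / (2 * qn bs x)
          = 1 / 2 * ‖x‖ * (|om bs x y| / qn bs x) := by ring
        _ = 1 / 2 * ‖y‖ * (|om bs x y| / qn bs y) := htri
        _ = (‖y‖ * |om bs x y|) / (2 * qn bs y) := by ring
    rw [div_eq_div_iff (ne_of_gt (by linarith : (0:ℝ) < 2 * qn bs x))
      (ne_of_gt (by linarith : (0:ℝ) < 2 * qn bs y))] at htri2
    have hkey : ‖x‖ * qn bs y = ‖y‖ * qn bs x := by
      have e : (2 * |om bs x y|) * (‖x‖ * qn bs y) = (2 * |om bs x y|) * (‖y‖ * qn bs x) := by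
        linear_combination htri2
      exact mul_left_cancel₀ (by positivity) e
    apply (bnormal_iff bs y x hx).2
    rw [abs_om_swap bs y x, ← h]
    linarith [hkey]
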